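/- Let α be an algebraic integer of degree n over ℚ, p a prime, and R = ℤ + pℤ[α]. Then 𝔪 = pℤ[α] is a maximal ideal of R and dim_{𝔽_p}(𝔪/𝔪²) = n. -/

import Mathlib

open Polynomial Pointwise

set_option maxHeartbeats 1000000
set_option synthInstance.maxHeartbeats 400000

private lemma mem_psmul {R M : Type*} [CommRing R] [AddCommGroup M] [Module R M] (a : R)
    (x : M) : x ∈ a • (⊤ : Submodule R M) ↔ ∃ y, a • y = x := by
  rw [← SetLike.mem_coe, Submodule.coe_pointwise_smul, Set.mem_smul_set]
  simp

private lemma map_psmul {R M N : Type*} [CommRing R] [AddCommGroup M] [AddCommGroup N]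
    [Module R M] [Module R N] (e : M ≃ₗ[R] N) (a : R) :
    (a • (⊤ : Submodule R M)).map (e : M →ₗ[R] N) = a • (⊤ : Submodule R N) := by
  ext x
  simp only [Submodule.mem_map, mem_psmul]
  constructor
  · rintro ⟨w, ⟨y, rfl⟩, rfl⟩
    exact ⟨e y, (e.toLinearMap.map_smul a y).symm⟩
  · rintro ⟨y, rfl⟩
    exact ⟨a • e.symm y, ⟨e.symm y, rfl⟩, by simp⟩

private lemma psmul_pi (a : ℤ) (d : ℕ) :
    a • (⊤ : Submodule ℤ (Fin d → ℤ)) =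
      Submodule.pi Set.univ (fun _ => a • (⊤ : Submodule ℤ ℤ)) := by
  ext x
  simp only [mem_psmul, Submodule.mem_pi, Set.mem_univ, forall_true_left]
  constructor
  · rintro ⟨y, rfl⟩ i
    exact ⟨y i, rfl⟩
  · intro h
    choose y hy using h
    exact ⟨y, funext hy⟩

private lemma psmul_int (a : ℤ) : a • (⊤ : Submodule ℤ ℤ) = Ideal.span {a} := by
  ext x
  rw [mem_psmul, Ideal.mem_span_singleton]
  simp only [smul_eq_mul]
  exact ⟨fun ⟨y, hy⟩ => ⟨y, hy.symm⟩, fun ⟨y, hy⟩ => ⟨y, hy.symm⟩⟩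


/-- Let `α` be an algebraic integer of degree `n` (a root of a monic irreducible integer
polynomial of degree `n`), `p` a prime, and `R = ℤ + pℤ[α]`. Then `𝔪 = pℤ[α]` is a maximal
ideal of `R` and `dim_{𝔽_p}(𝔪/𝔪²) = n` (the residue field `R/𝔪` is `𝔽_p`). -/
theorem stmt10 (n : ℕ) (α : ℂ) (f : Polynomial ℤ) (hmonic : f.Monic)
    (hirr : Irreducible f) (hdeg : f.natDegree = n)
    (hroot : Polynomial.aeval α f = 0)
    (p : ℕ) (hp : p.Prime)
    (R : Subring ℂ)
    (hR : (R : Set ℂ) = {x | ∃ m : ℤ, ∃ w ∈ Subring.closure {α}, x = m + p * w})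
    (𝔪 : Ideal ↥R)
    (h𝔪 : ∀ x : ↥R, x ∈ 𝔪 ↔ ∃ w ∈ Subring.closure {α}, (x : ℂ) = p * w) :
    𝔪.IsMaximal ∧ Module.finrank (↥R ⧸ 𝔪) 𝔪.Cotangent = n := by
  haveI : Fact p.Prime := ⟨hp⟩
  set S : Subring ℂ := Subring.closure {α} with hS
  have hmemR : ∀ x : ℂ, x ∈ R ↔ ∃ m : ℤ, ∃ w ∈ S, x = m + p * w := by
    intro x; rw [← SetLike.mem_coe, hR]; rfl
  -- integrality
  have hint : IsIntegral ℤ α := ⟨f, hmonic, hroot⟩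
  have hSint : ∀ w ∈ S, IsIntegral ℤ w := by
    intro w hw
    have : S ≤ (integralClosure ℤ ℂ).toSubring := by
      rw [hS]; exact Subring.closure_le.2 (by simpa [mem_integralClosure_iff] using hint)
    exact this hw
  -- key divisibility lemma
  have key : ∀ m : ℤ, ∀ w ∈ S, (m : ℂ) = p * w → (p : ℤ) ∣ m := by
    intro m w hw hmw
    have hp0 : (p : ℂ) ≠ 0 := by exact_mod_cast hp.ne_zero
    have hq : algebraMap ℚ ℂ ((m : ℚ) / p) = w := by
      push_cast
      field_simp
      exact_mod_cast hmw
    have hqint : IsIntegral ℤ ((m : ℚ) / p) := by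
      rw [← isIntegral_algebraMap_iff (algebraMap ℚ ℂ).injective, hq]
      exact hSint w hw
    obtain ⟨k, hk⟩ := IsIntegrallyClosed.isIntegral_iff.mp hqint
    refine ⟨k, ?_⟩
    have hp0' : (p : ℚ) ≠ 0 := by exact_mod_cast hp.ne_zero
    have : (m : ℚ) = p * k := by
      field_simp at hk
      rw [← hk, algebraMap_int_eq, eq_intCast]; ring
    exact_mod_cast this
  -- p is in R and in 𝔪
  have hpR : (p : ℂ) ∈ R := by
    rw [hmemR]; exact ⟨0, 1, one_mem S, by push_cast; ring⟩
  have hpw_mem : ∀ w ∈ S, (p : ℂ) * w ∈ R := by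
    intro w hw
    rw [hmemR]; exact ⟨0, w, hw, by push_cast; ring⟩
  -- the ring hom ℤ → R⧸𝔪 is surjective with kernel (p)
  set g : ℤ →+* ↥R ⧸ 𝔪 := (Ideal.Quotient.mk 𝔪).comp (Int.castRingHom ↥R) with hg
  have hgsurj : Function.Surjective g := by
    intro x
    obtain ⟨x, rfl⟩ := Ideal.Quotient.mk_surjective x
    obtain ⟨m, w, hw, hx⟩ := (hmemR x).mp x.2
    refine ⟨m, ?_⟩
    have : (m : ↥R) - x ∈ 𝔪 := by
      rw [h𝔪]
      exact ⟨-w, neg_mem hw, by push_cast [hx]; ring⟩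
    simpa [hg, eq_comm] using (Ideal.Quotient.mk_eq_mk_iff_sub_mem _ _).mpr this
  have hgker : RingHom.ker g = Ideal.span {(p : ℤ)} := by
    ext m
    simp only [RingHom.mem_ker, hg, RingHom.comp_apply, Ideal.Quotient.eq_zero_iff_mem,
      Ideal.mem_span_singleton]
    rw [h𝔪]
    constructor
    · rintro ⟨w, hw, hmw⟩
      exact key m w hw (by exact_mod_cast hmw)
    · rintro ⟨k, rfl⟩
      refine ⟨(k : ℂ), by exact_mod_cast intCast_mem S k, ?_⟩
      rw [Int.coe_castRingHom]
      push_cast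
      ring
  have e1 : (↥R ⧸ 𝔪) ≃+* ZMod p :=
    (RingHom.quotientKerEquivOfSurjective hgsurj).symm.trans
      ((Ideal.quotEquivOfEq hgker).trans (Int.quotientSpanNatEquivZMod p))
  have hmax : 𝔪.IsMaximal := by
    apply Ideal.Quotient.maximal_of_isField
    exact e1.toMulEquiv.isField (Field.toIsField (ZMod p))
  refine ⟨hmax, ?_⟩
  -- minpoly ℤ α = f
  have hminpoly : minpoly ℤ α = f := by
    obtain ⟨c, hc⟩ := minpoly.isIntegrallyClosed_dvd hint hroot
    rcases hirr.isUnit_or_isUnit hc with h | h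
    · exact absurd h (minpoly.not_isUnit ℤ α)
    · refine eq_of_monic_of_associated (minpoly.monic hint) hmonic ?_
      exact ⟨h.unit, by rw [IsUnit.unit_spec, ← hc]⟩
  -- power basis
  have hdim : (Algebra.adjoin.powerBasis' hint).dim = n := by
    rw [Algebra.adjoin.powerBasis'_dim, hminpoly, hdeg]
  have hpw_mem : ∀ w ∈ S, (p : ℂ) * w ∈ R := by
    intro w hw
    rw [hmemR]; exact ⟨0, w, hw, by push_cast; ring⟩
  have hpR : (p : ℂ) ∈ R := by
    simpa using hpw_mem 1 (one_mem S)
  -- the additive map S → 𝔪, w ↦ p * w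
  obtain ⟨φ, hφval⟩ : ∃ φ : ↥S →+ ↥𝔪, ∀ w : ↥S, ((φ w : ↥R) : ℂ) = (p : ℂ) * w := by
    refine ⟨{ toFun := fun w => ⟨⟨(p : ℂ) * w, hpw_mem w w.2⟩, (h𝔪 _).mpr ⟨w, w.2, rfl⟩⟩
              map_zero' := ?_
              map_add' := ?_ }, fun w => rfl⟩
    · apply Subtype.ext; apply Subtype.ext
      push_cast
      ring
    · intro a b
      apply Subtype.ext; apply Subtype.ext
      push_cast
      ring
  obtain ⟨ψ, hψval⟩ : ∃ ψ : ↥S →ₗ[ℤ] 𝔪.Cotangent,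
      ∀ w : ↥S, ψ w = 𝔪.toCotangent (φ w) :=
    ⟨((𝔪.toCotangent.toAddMonoidHom).comp φ).toIntLinearMap, fun _ => rfl⟩
  have hψsurj : Function.Surjective ψ := by
    intro x
    obtain ⟨y, rfl⟩ := 𝔪.toCotangent_surjective x
    obtain ⟨w, hw, hww⟩ := (h𝔪 y.1).mp y.2
    refine ⟨⟨w, hw⟩, ?_⟩
    rw [hψval]
    congr 1
    apply Subtype.ext; apply Subtype.ext
    rw [hφval]
    exact hww.symm
  -- membership in 𝔪 ^ 2
  have hsq : ∀ x : ↥R, x ∈ 𝔪 ^ 2 ↔ ∃ s ∈ S, (x : ℂ) = (p : ℂ) ^ 2 * s := by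
    intro x
    rw [pow_two]
    constructor
    · intro hx
      refine Submodule.mul_induction_on hx ?_ ?_
      · intro r hr t ht
        obtain ⟨wr, hwr, hr'⟩ := (h𝔪 r).mp hr
        obtain ⟨wt, hwt, ht'⟩ := (h𝔪 t).mp ht
        refine ⟨wr * wt, mul_mem hwr hwt, ?_⟩
        push_cast
        rw [hr', ht']
        ring
      · rintro a b ⟨sa, hsa, ha⟩ ⟨sb, hsb, hb⟩
        refine ⟨sa + sb, add_mem hsa hsb, ?_⟩
        push_cast
        rw [ha, hb]
        ring
    · rintro ⟨s, hs, hx⟩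
      have ha : (⟨(p : ℂ), hpR⟩ : ↥R) ∈ 𝔪 := (h𝔪 _).mpr ⟨1, one_mem S, by push_cast; ring⟩
      have hb : (⟨(p : ℂ) * s, hpw_mem s hs⟩ : ↥R) ∈ 𝔪 := (h𝔪 _).mpr ⟨s, hs, rfl⟩
      have : x = (⟨(p : ℂ), hpR⟩ : ↥R) * ⟨(p : ℂ) * s, hpw_mem s hs⟩ := by
        apply Subtype.ext
        push_cast
        rw [hx]
        ring
      rw [this]
      exact Ideal.mul_mem_mul ha hb
  have hp0 : (p : ℂ) ≠ 0 := by exact_mod_cast hp.ne_zero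
  -- kernel of ψ
  have hker : LinearMap.ker ψ = (p : ℤ) • (⊤ : Submodule ℤ ↥S) := by
    ext w
    rw [LinearMap.mem_ker, hψval, Ideal.toCotangent_eq_zero, hsq, mem_psmul]
    constructor
    · rintro ⟨s, hs, hws⟩
      refine ⟨⟨s, hs⟩, ?_⟩
      apply Subtype.ext
      have h1 : (((p : ℤ) • (⟨s, hs⟩ : ↥S) : ↥S) : ℂ) = (p : ℂ) * s := by
        push_cast [zsmul_eq_mul]
        ring
      rw [h1]
      rw [hφval] at hws
      have h2 : (p : ℂ) * (w : ℂ) = (p : ℂ) * ((p : ℂ) * s) := by rw [hws]; ring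
      exact (mul_left_cancel₀ hp0 h2).symm
    · rintro ⟨y, rfl⟩
      refine ⟨(y : ℂ), y.2, ?_⟩
      rw [hφval]
      push_cast [zsmul_eq_mul]
      ring
  -- the chain of equivalences
  have e2 : (↥S ⧸ ((p : ℤ) • (⊤ : Submodule ℤ ↥S))) ≃ₗ[ℤ] 𝔪.Cotangent :=
    (Submodule.quotEquivOfEq _ _ hker.symm).trans (ψ.quotKerEquivOfSurjective hψsurj)
  set d := (Algebra.adjoin.powerBasis' hint).dim with hd
  have eA : ↥S ≃ₗ[ℤ] ↥(Algebra.adjoin ℤ ({α} : Set ℂ)) :=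
    (Subring.closureEquivAdjoinInt ({α} : Set ℂ)).toLinearEquiv
  have bS : Module.Basis (Fin d) ℤ ↥S := (Algebra.adjoin.powerBasis' hint).basis.map eA.symm
  have eB : ↥S ≃ₗ[ℤ] (Fin d → ℤ) := bS.equivFun
  have e3 : (↥S ⧸ ((p : ℤ) • (⊤ : Submodule ℤ ↥S))) ≃ₗ[ℤ]
      ((Fin d → ℤ) ⧸ ((p : ℤ) • (⊤ : Submodule ℤ (Fin d → ℤ)))) :=
    Submodule.Quotient.equiv _ _ eB (map_psmul eB p)
  have e4 : ((Fin d → ℤ) ⧸ ((p : ℤ) • (⊤ : Submodule ℤ (Fin d → ℤ)))) ≃ₗ[ℤ]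
      ∀ _ : Fin d, (ℤ ⧸ ((p : ℤ) • (⊤ : Submodule ℤ ℤ))) :=
    (Submodule.quotEquivOfEq _ _ (psmul_pi p d)).trans
      (Submodule.quotientPi fun _ => (p : ℤ) • (⊤ : Submodule ℤ ℤ))
  have e5 : (ℤ ⧸ ((p : ℤ) • (⊤ : Submodule ℤ ℤ))) ≃+* ZMod p :=
    (Ideal.quotEquivOfEq (psmul_int p)).trans (Int.quotientSpanNatEquivZMod p)
  have E : 𝔪.Cotangent ≃ (Fin d → ZMod p) :=
    e2.symm.toEquiv.trans <| e3.toEquiv.trans <| e4.toEquiv.trans <|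
      Equiv.piCongrRight fun _ => e5.toEquiv
  -- cardinalities
  have hcard1 : Nat.card (↥R ⧸ 𝔪) = p := by
    rw [Nat.card_congr e1.toEquiv, Nat.card_zmod]
  have hcard2 : Nat.card 𝔪.Cotangent = p ^ d := by
    rw [Nat.card_congr E, Nat.card_fun, Nat.card_zmod, Nat.card_eq_fintype_card,
      Fintype.card_fin]
  haveI : Finite (↥R ⧸ 𝔪) := Finite.of_equiv _ e1.toEquiv.symm
  haveI : Finite 𝔪.Cotangent := Finite.of_equiv _ E.symm
  haveI := hmax
  letI instF : Field (↥R ⧸ 𝔪) := Ideal.Quotient.field 𝔪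
  letI : Fintype (↥R ⧸ 𝔪) := Fintype.ofFinite _
  letI : Fintype 𝔪.Cotangent := Fintype.ofFinite _
  have hcard3 := @Module.card_eq_pow_finrank (↥R ⧸ 𝔪) 𝔪.Cotangent instF.toDivisionRing _ inferInstance _ _
  rw [← Nat.card_eq_fintype_card, ← Nat.card_eq_fintype_card, hcard1, hcard2] at hcard3
  have hfr := Nat.pow_right_injective hp.two_le hcard3
  rw [← hdim]
  exact hfr.symm
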